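/- For u ≥ 1, the number of finite sequences of nonzero integers whose absolute values sum to 2u and whose entries sum to 0 equals Σ_{m=0}^{u} (-1)^u 9^m C(1/2, u-m) C(-1/2, m) / 2, i.e. one half times (-1)^u times the coefficient Σ_{m=0}^{u} 3^{2m} binom(1/2, u-m) binom(-1/2, m). -/

import Mathlib

/-- Generalized binomial coefficient α(α-1)···(α-k+1)/k! for rational α. -/
noncomputable def gbinom (α : ℚ) (k : ℕ) : ℚ :=
  (∏ i ∈ Finset.range k, (α - i)) / (Nat.factorial k)


lemma gbinom_zero (α : ℚ) : gbinom α 0 = 1 := by simp [gbinom]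

lemma gbinom_succ (α : ℚ) (n : ℕ) :
    gbinom α (n + 1) = gbinom α n * (α - n) / (n + 1) := by
  unfold gbinom
  rw [Finset.prod_range_succ, Nat.factorial_succ]
  push_cast
  rw [div_mul_eq_mul_div, div_div, mul_comm ((n:ℚ)+1)]

noncomputable def aq (n : ℕ) : ℚ := (-1) ^ n * gbinom (1/2) n
noncomputable def bq (n : ℕ) : ℚ := (-9) ^ n * gbinom (-(1/2)) n

lemma aq_rec (n : ℕ) : (2*(n:ℚ)+2) * aq (n+1) = (2*(n:ℚ)-1) * aq n := by
  have h2 : ((n : ℚ) + 1) ≠ 0 := by positivity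
  simp only [aq, gbinom_succ, pow_succ]
  field_simp
  ring

lemma bq_rec (n : ℕ) : (2*(n:ℚ)+2) * bq (n+1) = (18*(n:ℚ)+9) * bq n := by
  have h2 : ((n : ℚ) + 1) ≠ 0 := by positivity
  simp only [bq, gbinom_succ, pow_succ]
  field_simp
  ring

open PowerSeries

lemma coeff_derivativeFun' (f : ℚ⟦X⟧) (n : ℕ) :
    PowerSeries.coeff n f.derivativeFun = PowerSeries.coeff (n + 1) f * (n + 1) :=
  coeff_derivative f n

noncomputable def Sp : ℚ⟦X⟧ := PowerSeries.mk aq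
noncomputable def Tp : ℚ⟦X⟧ := PowerSeries.mk bq
noncomputable def pq (n : ℕ) : ℚ := PowerSeries.coeff n (Sp * Tp)

lemma coeff_two_mul (f : ℚ⟦X⟧) (n : ℕ) (c : ℚ) :
    PowerSeries.coeff n ((C c) * f) = c * PowerSeries.coeff n f := by
  simp

lemma ode_S : ((2 : ℚ⟦X⟧) - 2 * X) * derivativeFun Sp = - Sp := by
  have key : ∀ n : ℕ, PowerSeries.coeff n (((2 : ℚ⟦X⟧) - 2 * X) * derivativeFun Sp)
      = PowerSeries.coeff n (- Sp) := by
    intro n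
    have h2 : ((2 : ℚ⟦X⟧)) = C 2 := (map_ofNat (C (R := ℚ)) 2).symm
    rw [sub_mul, map_sub, h2, coeff_two_mul, mul_assoc, coeff_two_mul, map_neg]
    cases n with
    | zero =>
        simp only [coeff_derivativeFun', Sp, coeff_mk]
        rw [PowerSeries.coeff_zero_X_mul]
        have := aq_rec 0
        push_cast at this ⊢
        norm_num at this ⊢
        linarith
    | succ m =>
        simp only [coeff_derivativeFun', PowerSeries.coeff_succ_X_mul, Sp, coeff_mk]
        have h1 := aq_rec (m+1)
        have h0 := aq_rec m
        push_cast at h1 h0 ⊢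
        nlinarith [h1, h0]
  exact PowerSeries.ext key

lemma ode_T : ((2 : ℚ⟦X⟧) - 18 * X) * derivativeFun Tp = 9 * Tp := by
  have key : ∀ n : ℕ, PowerSeries.coeff n (((2 : ℚ⟦X⟧) - 18 * X) * derivativeFun Tp)
      = PowerSeries.coeff n (9 * Tp) := by
    intro n
    have h2 : ((2 : ℚ⟦X⟧)) = C 2 := (map_ofNat (C (R := ℚ)) 2).symm
    have h18 : ((18 : ℚ⟦X⟧)) = C 18 := (map_ofNat (C (R := ℚ)) 18).symm
    have h9 : ((9 : ℚ⟦X⟧)) = C 9 := (map_ofNat (C (R := ℚ)) 9).symm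
    rw [sub_mul, map_sub, h2, coeff_two_mul, h18, mul_assoc, coeff_two_mul, h9, coeff_two_mul]
    cases n with
    | zero =>
        simp only [coeff_derivativeFun', Tp, coeff_mk]
        rw [PowerSeries.coeff_zero_X_mul]
        have := bq_rec 0
        push_cast at this ⊢
        norm_num at this ⊢
        linarith
    | succ m =>
        simp only [coeff_derivativeFun', PowerSeries.coeff_succ_X_mul, Tp, coeff_mk]
        have h1 := bq_rec (m+1)
        have h0 := bq_rec m
        push_cast at h1 h0 ⊢
        nlinarith [h1, h0]
  exact PowerSeries.ext key

lemma ode_P : ((2 : ℚ⟦X⟧) - 20 * X + 18 * X^2) * derivativeFun (Sp * Tp) = 8 * (Sp * Tp) := by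
  rw [derivativeFun_mul, smul_eq_mul, smul_eq_mul]
  linear_combination ((1 : ℚ⟦X⟧) - 9*X) * Tp * ode_S + ((1 : ℚ⟦X⟧) - X) * Sp * ode_T

lemma prec (m : ℕ) :
    (2*((m:ℚ)+1)+2) * pq (m+2) = (20*((m:ℚ)+1)+8) * pq (m+1) - 18*(m:ℚ) * pq m := by
  have hexp : ((2 : ℚ⟦X⟧) - 20 * X + 18 * X^2) * derivativeFun (Sp*Tp)
      = C 2 * derivativeFun (Sp*Tp) - C 20 * (X * derivativeFun (Sp*Tp))
        + C 18 * (X * (X * derivativeFun (Sp*Tp))) := by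
    rw [map_ofNat (C (R := ℚ)) 2, map_ofNat (C (R := ℚ)) 20, map_ofNat (C (R := ℚ)) 18]; ring
  have h8 : (8 : ℚ⟦X⟧) * (Sp*Tp) = C 8 * (Sp*Tp) := by rw [map_ofNat (C (R := ℚ)) 8]
  have h := ode_P
  rw [hexp, h8] at h
  have hc := congrArg (PowerSeries.coeff (m+1)) h
  simp only [map_add, map_sub, coeff_two_mul, PowerSeries.coeff_succ_X_mul] at hc
  cases m with
  | zero =>
      rw [PowerSeries.coeff_zero_X_mul] at hc
      simp only [coeff_derivativeFun'] at hc
      simp only [pq]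
      push_cast at hc ⊢
      norm_num at hc ⊢
      linarith
  | succ k =>
      rw [PowerSeries.coeff_succ_X_mul] at hc
      simp only [coeff_derivativeFun'] at hc
      simp only [pq]
      push_cast at hc ⊢
      norm_num at hc ⊢
      linarith

lemma pq0 : pq 0 = 1 := by
  simp [pq, PowerSeries.coeff_mul, Finset.Nat.antidiagonal_zero, Sp, Tp, aq, bq, gbinom_zero]

lemma pq1 : pq 1 = 4 := by
  simp [pq, PowerSeries.coeff_mul, Finset.Nat.antidiagonal_succ, Sp, Tp, aq, bq, gbinom_succ, gbinom_zero, Prod.map]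
  norm_num

lemma zpow2_sub_one (a : ℤ) : (2:ℚ)^(a-1) = 2^a / 2 := by
  rw [zpow_sub₀ (two_ne_zero), zpow_one]

lemma zpow2_sub_two (a : ℤ) : (2:ℚ)^(a-2) = 2^a / 4 := by
  rw [zpow_sub₀ (two_ne_zero)]
  norm_num

lemma zpow2_add_one (a : ℤ) : (2:ℚ)^(a+1) = 2^a * 2 := by
  rw [zpow_add₀ (two_ne_zero), zpow_one]

lemma zpow2_add_two (a : ℤ) : (2:ℚ)^(a+2) = 2^a * 4 := by
  rw [zpow_add₀ (two_ne_zero)]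
  norm_num

noncomputable def dd (A B : ℕ) : ℚ :=
  ∑ m ∈ Finset.range (A+1), (2:ℚ)^((A:ℤ)+(B:ℤ)-2*(m:ℤ)) * (A.choose m) * (B.choose m)

noncomputable def Xc (A B : ℕ) : ℚ :=
  ∑ j ∈ Finset.range (A+1), (2:ℚ)^((A:ℤ)+(B:ℤ)-2*(j:ℤ)) * (A.choose (j+1)) * (B.choose j)

lemma dd_big (A B N : ℕ) (h : A+1 ≤ N) :
    dd A B = ∑ m ∈ Finset.range N, (2:ℚ)^((A:ℤ)+(B:ℤ)-2*(m:ℤ)) * (A.choose m) * (B.choose m) := by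
  apply Finset.sum_subset (Finset.range_subset_range.2 h)
  intro m _ hm
  rw [Finset.mem_range, not_lt] at hm
  rw [Nat.choose_eq_zero_of_lt (by omega)]
  simp

lemma Xc_big (A B N : ℕ) (h : A ≤ N) :
    Xc A B = ∑ j ∈ Finset.range N, (2:ℚ)^((A:ℤ)+(B:ℤ)-2*(j:ℤ)) * (A.choose (j+1)) * (B.choose j) := by
  rcases Nat.lt_or_ge N (A+1) with hN | hN
  · have : N = A := by omega
    subst this
    rw [Xc, Finset.sum_range_succ, Nat.choose_eq_zero_of_lt (by omega)]
    simp
  · apply Finset.sum_subset (Finset.range_subset_range.2 hN)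
    intro j _ hj
    rw [Finset.mem_range, not_lt] at hj
    rw [Nat.choose_eq_zero_of_lt (by omega)]
    simp

lemma dd_symm (A B : ℕ) : dd A B = dd B A := by
  rw [dd_big A B (A+B+1) (by omega), dd_big B A (A+B+1) (by omega)]
  apply Finset.sum_congr rfl
  intro m _
  ring

lemma dL2 (A B : ℕ) : dd A (B+1) = 2 * dd A B + Xc A B / 2 := by
  rw [dd, dd, Finset.sum_range_succ', Finset.sum_range_succ', Xc_big A B A (le_refl A)]
  have hterm : ∀ j ∈ Finset.range A,
      (2:ℚ)^((A:ℤ)+((B+1:ℕ):ℤ)-2*((j+1:ℕ):ℤ)) * (A.choose (j+1)) * ((B+1).choose (j+1))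
      = 2 * ((2:ℚ)^((A:ℤ)+(B:ℤ)-2*((j+1:ℕ):ℤ)) * (A.choose (j+1)) * (B.choose (j+1)))
        + ((2:ℚ)^((A:ℤ)+(B:ℤ)-2*((j:ℕ):ℤ)) * (A.choose (j+1)) * (B.choose j)) / 2 := by
    intro j _
    rw [Nat.choose_succ_succ' B j]
    push_cast
    have e1 : (A:ℤ)+((B:ℤ)+1)-2*((j:ℤ)+1) = ((A:ℤ)+(B:ℤ)-2*(j:ℤ)) - 1 := by ring
    have e2 : (A:ℤ)+(B:ℤ)-2*((j:ℤ)+1) = ((A:ℤ)+(B:ℤ)-2*(j:ℤ)) - 2 := by ring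
    rw [e1, e2, zpow2_sub_one, zpow2_sub_two]
    ring
  rw [Finset.sum_congr rfl hterm]
  rw [Finset.sum_add_distrib, ← Finset.mul_sum, ← Finset.sum_div]
  push_cast
  simp only [Nat.choose_zero_right, Nat.cast_one, mul_one, Nat.cast_zero, mul_zero, sub_zero]
  rw [show (A:ℤ)+((B:ℤ)+1) = ((A:ℤ)+(B:ℤ)) + 1 by ring, zpow2_add_one]
  ring

lemma dL1 (A B : ℕ) :
    dd (A+1) (B+1) = 5 * dd A B + Xc A B + Xc B A := by
  rw [dd, Finset.sum_range_succ']
  have hterm : ∀ j ∈ Finset.range (A+1),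
      (2:ℚ)^(((A+1:ℕ):ℤ)+((B+1:ℕ):ℤ)-2*((j+1:ℕ):ℤ)) * ((A+1).choose (j+1)) * ((B+1).choose (j+1))
      = (2:ℚ)^((A:ℤ)+(B:ℤ)-2*((j:ℕ):ℤ)) * (A.choose j) * (B.choose j)
        + (2:ℚ)^((A:ℤ)+(B:ℤ)-2*((j:ℕ):ℤ)) * (A.choose (j+1)) * (B.choose j)
        + (2:ℚ)^((A:ℤ)+(B:ℤ)-2*((j:ℕ):ℤ)) * (B.choose (j+1)) * (A.choose j)
        + 4 * ((2:ℚ)^((A:ℤ)+(B:ℤ)-2*((j+1:ℕ):ℤ)) * (A.choose (j+1)) * (B.choose (j+1))) := by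
    intro j _
    rw [Nat.choose_succ_succ' A j, Nat.choose_succ_succ' B j]
    push_cast
    have e1 : ((A:ℤ)+1)+((B:ℤ)+1)-2*((j:ℤ)+1) = (A:ℤ)+(B:ℤ)-2*(j:ℤ) := by ring
    have e2 : (A:ℤ)+(B:ℤ)-2*((j:ℤ)+1) = ((A:ℤ)+(B:ℤ)-2*(j:ℤ)) - 2 := by ring
    rw [e1, e2, zpow2_sub_two]
    ring
  rw [Finset.sum_congr rfl hterm]
  simp only [Finset.sum_add_distrib]
  rw [← Finset.mul_sum]
  -- identify the four sums
  have h1 : ∑ j ∈ Finset.range (A+1), (2:ℚ)^((A:ℤ)+(B:ℤ)-2*((j:ℕ):ℤ)) * (A.choose j) * (B.choose j) = dd A B := rfl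
  have h2 : ∑ j ∈ Finset.range (A+1), (2:ℚ)^((A:ℤ)+(B:ℤ)-2*((j:ℕ):ℤ)) * (A.choose (j+1)) * (B.choose j) = Xc A B := rfl
  have h3 : ∑ j ∈ Finset.range (A+1), (2:ℚ)^((A:ℤ)+(B:ℤ)-2*((j:ℕ):ℤ)) * (B.choose (j+1)) * (A.choose j) = Xc B A := by
    rw [Xc_big B A (A+B+2) (by omega)]
    rw [show (∑ j ∈ Finset.range (A+1), (2:ℚ)^((A:ℤ)+(B:ℤ)-2*((j:ℕ):ℤ)) * (B.choose (j+1)) * (A.choose j))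
        = ∑ j ∈ Finset.range (A+B+2), (2:ℚ)^((A:ℤ)+(B:ℤ)-2*((j:ℕ):ℤ)) * (B.choose (j+1)) * (A.choose j) from
      Finset.sum_subset (Finset.range_subset_range.2 (by omega)) (fun j _ hj => by
        rw [Finset.mem_range, not_lt] at hj
        rw [Nat.choose_eq_zero_of_lt (show A < j by omega)]
        simp)]
    apply Finset.sum_congr rfl
    intro j _
    ring
  have h4 : ∑ j ∈ Finset.range (A+1), (2:ℚ)^((A:ℤ)+(B:ℤ)-2*((j+1:ℕ):ℤ)) * (A.choose (j+1)) * (B.choose (j+1))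
      = dd A B - (2:ℚ)^((A:ℤ)+(B:ℤ)) := by
    have : dd A B = ∑ m ∈ Finset.range (A+1+1), (2:ℚ)^((A:ℤ)+(B:ℤ)-2*((m:ℕ):ℤ)) * (A.choose m) * (B.choose m) :=
      dd_big A B (A+1+1) (by omega)
    rw [Finset.sum_range_succ'] at this
    push_cast at this ⊢
    simp only [Nat.choose_zero_right, Nat.cast_one, mul_one, Nat.cast_zero, mul_zero, sub_zero] at this
    linarith
  rw [h1, h2, h3, h4]
  push_cast
  simp only [Nat.choose_zero_right, Nat.cast_one, mul_one, Nat.cast_zero, mul_zero, sub_zero]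
  rw [show ((A:ℤ)+1)+((B:ℤ)+1) = ((A:ℤ)+(B:ℤ)) + 2 by ring, zpow2_add_two]
  ring

lemma dL2' (A B : ℕ) : dd (A+1) B = 2 * dd A B + Xc B A / 2 := by
  rw [dd_symm (A+1) B, dL2 B A, dd_symm B A]

lemma dloc (A B : ℕ) :
    dd (A+1) (B+1) = 2 * dd A (B+1) + 2 * dd (A+1) B - 3 * dd A B := by
  rw [dL1, dL2, dL2']
  ring

lemma ddiag (A : ℕ) : dd (A+1) (A+1) + 3 * dd A A = 4 * dd A (A+1) := by
  rw [dL1, dL2]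
  ring

lemma dd_zero_right (A : ℕ) : dd A 0 = (2:ℚ)^(A:ℤ) := by
  rw [dd]
  rw [Finset.sum_eq_single 0]
  · simp
  · intro m _ hm
    rw [Nat.choose_eq_zero_of_lt (show (0:ℕ) < m by omega)]
    simp
  · intro h
    simp at h

lemma dd_zero_left (B : ℕ) : dd 0 B = (2:ℚ)^(B:ℤ) := by
  rw [dd_symm, dd_zero_right]

lemma dd_zero_zero : dd 0 0 = 1 := by
  rw [dd_zero_right]
  norm_num

lemma zpow2_sub_two' (a : ℤ) : (2:ℚ)^(a-2) = 2^a / 4 := by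
  rw [zpow_sub₀ (two_ne_zero)]; norm_num

lemma zpow2_add_two' (a : ℤ) : (2:ℚ)^(a+2) = 2^a * 4 := by
  rw [zpow_add₀ (two_ne_zero)]; norm_num

lemma zpow2_add_four' (a : ℤ) : (2:ℚ)^(a+4) = 2^a * 16 := by
  rw [zpow_add₀ (two_ne_zero)]; norm_num

/-- absorption: C(n,k+1)(k+1) = C(n,k)(n-k) over ℚ, universally. -/
lemma choose_cast_rel (n k : ℕ) :
    ((n.choose (k+1) : ℚ)) * ((k:ℚ)+1) = (n.choose k : ℚ) * ((n:ℚ) - k) := by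
  rcases le_or_gt (k+1) n with h | h
  · have hN := Nat.choose_succ_right_eq n k
    have : ((n - k : ℕ) : ℚ) = (n:ℚ) - k := by
      rw [Nat.cast_sub (by omega)]
    calc ((n.choose (k+1) : ℚ)) * ((k:ℚ)+1)
        = ((n.choose (k+1) * (k+1) : ℕ) : ℚ) := by push_cast; ring
      _ = ((n.choose k * (n - k) : ℕ) : ℚ) := by rw [hN]
      _ = (n.choose k : ℚ) * ((n:ℚ) - k) := by push_cast [Nat.cast_sub (show k ≤ n by omega)]; ring
  · rcases le_or_gt k n with h2 | h2
    · have : k = n := by omega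
      subst this
      simp [Nat.choose_eq_zero_of_lt (show k < k+1 by omega)]
    · rw [Nat.choose_eq_zero_of_lt (by omega), Nat.choose_eq_zero_of_lt h2]
      simp

/-- row-raising: (m+1) C(m,j+1) = (m-j) C(m+1,j+1) over ℚ. -/
lemma choose_row2 (m j : ℕ) :
    ((m:ℚ)+1) * ((m.choose (j+1)) : ℚ) = ((m:ℚ) - j) * (((m+1).choose (j+1)) : ℚ) := by
  rcases le_or_gt (j+1) m with h | h
  · have h1 : (m+1) * m.choose (j+1) = (m+1).choose (j+2) * (j+2) :=
      Nat.add_one_mul_choose_eq m (j+1)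
    have h2 := Nat.choose_succ_right_eq (m+1) (j+1)
    -- h2 : (m+1).choose (j+2) * (j+2) = (m+1).choose (j+1) * (m+1-(j+1))
    have h3 : (m+1) * m.choose (j+1) = (m+1).choose (j+1) * (m - j) := by
      rw [h1, h2]
      congr 1
      omega
    calc ((m:ℚ)+1) * (m.choose (j+1) : ℚ) = (((m+1) * m.choose (j+1) : ℕ) : ℚ) := by push_cast; ring
      _ = (((m+1).choose (j+1) * (m - j) : ℕ) : ℚ) := by rw [h3]
      _ = ((m:ℚ) - j) * ((m+1).choose (j+1) : ℚ) := by
          push_cast [Nat.cast_sub (show j ≤ m by omega)]; ring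
  · rcases Nat.lt_or_ge m j with h2 | h2
    · rw [Nat.choose_eq_zero_of_lt (show m < j+1 by omega),
          Nat.choose_eq_zero_of_lt (show m+1 < j+1 by omega)]
      simp
    · have : j = m := by omega
      subst this
      rw [Nat.choose_eq_zero_of_lt (show j < j+1 by omega)]
      simp

noncomputable def Tz (a k : ℕ) : ℚ := (2:ℚ)^(2*(a:ℤ)-2*(k:ℤ)) * (a.choose k) * (a.choose k)

noncomputable def Gz (n k : ℕ) : ℚ := (2:ℚ)^(2*(n:ℤ)-2*(k:ℤ)) * (k:ℚ) *
  (-15*(k:ℚ)*(n.choose k)*(n.choose k) + (12-16*(k:ℚ))*(n.choose k)*(n.choose (k-1))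
    + (4-4*(k:ℚ))*(n.choose (k-1))*(n.choose (k-1)))

lemma zpt (m k : ℕ) :
    ((m:ℚ)+1)*((m:ℚ)+2)*Tz (m+2) k - 5*((m:ℚ)+1)*(2*((m:ℚ)+1)+1)*Tz (m+1) k
      + 9*((m:ℚ)+1)^2*Tz m k
    = Gz (m+1) (k+1) - Gz (m+1) k := by
  cases k with
  | zero =>
      simp only [Tz, Gz, Nat.choose_zero_right, Nat.choose_one_right, Nat.cast_zero, Nat.cast_one,
        zero_add, Nat.add_sub_cancel, Nat.cast_add, Nat.cast_ofNat, mul_zero, zero_mul, sub_zero,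
        Nat.sub_self]
      have e1 : 2*((m:ℤ)+2) = 2*(m:ℤ) + 4 := by ring
      have e2 : 2*((m:ℤ)+1) = 2*(m:ℤ) + 2 := by ring
      have e4 : 2*(m:ℤ)+2-2*(1:ℤ) = 2*(m:ℤ) := by ring
      rw [e1, e2, e4, zpow2_add_four', zpow2_add_two']
      push_cast
      ring
  | succ j =>
      have R1 := choose_cast_rel (m+1) j
      have R2 := choose_cast_rel (m+1) (j+1)
      have R3 := choose_row2 m j
      have R4 : (((m+2).choose (j+1)) : ℚ) = ((m+1).choose j : ℚ) + ((m+1).choose (j+1) : ℚ) := by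
        have := Nat.choose_succ_succ' (m+1) j
        exact_mod_cast congrArg (Nat.cast : ℕ → ℚ) this
      have hj1 : ((j:ℚ)+1) ≠ 0 := by positivity
      have hj2 : ((j:ℚ)+2) ≠ 0 := by positivity
      have hm1 : ((m:ℚ)+1) ≠ 0 := by positivity
      have hx : (((m+1).choose (j+1)) : ℚ) = ((m:ℚ)+1-j) * ((m+1).choose j : ℚ) / ((j:ℚ)+1) := by
        rw [eq_div_iff hj1]
        push_cast at R1 ⊢
        linarith [R1]
      have hy : (((m+1).choose (j+2)) : ℚ) = ((m:ℚ)-j) * (((m+1).choose (j+1)) : ℚ) / ((j:ℚ)+2) := by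
        rw [eq_div_iff hj2]
        push_cast at R2 ⊢
        linarith [R2]
      have hv : ((m.choose (j+1)) : ℚ) = ((m:ℚ)-j) * (((m+1).choose (j+1)) : ℚ) / ((m:ℚ)+1) := by
        rw [eq_div_iff hm1]
        linarith [R3]
      simp only [Tz, Gz, Nat.add_sub_cancel]
      have e1 : 2*((m+2:ℕ):ℤ)-2*((j+1:ℕ):ℤ) = (2*(m:ℤ)-2*(j:ℤ)) + 2 := by push_cast; ring
      have e2 : 2*((m+1:ℕ):ℤ)-2*((j+1:ℕ):ℤ) = (2*(m:ℤ)-2*(j:ℤ)) := by push_cast; ring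
      have e3 : 2*((m:ℕ):ℤ)-2*((j+1:ℕ):ℤ) = (2*(m:ℤ)-2*(j:ℤ)) - 2 := by push_cast; ring
      have e4 : 2*((m+1:ℕ):ℤ)-2*((j+2:ℕ):ℤ) = (2*(m:ℤ)-2*(j:ℤ)) - 2 := by push_cast; ring
      rw [e1, e2, e3, e4, zpow2_add_two', zpow2_sub_two']
      rw [R4, hy, hv, hx]
      push_cast
      field_simp
      ring

noncomputable def ee (n : ℕ) : ℚ := ∑ k ∈ Finset.range (n+1), Tz n k

lemma ee_big (n N : ℕ) (h : n+1 ≤ N) : ee n = ∑ k ∈ Finset.range N, Tz n k := by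
  apply Finset.sum_subset (Finset.range_subset_range.2 h)
  intro k _ hk
  rw [Finset.mem_range, not_lt] at hk
  rw [Tz, Nat.choose_eq_zero_of_lt (by omega)]
  simp

lemma Gz_zero (n : ℕ) : Gz n 0 = 0 := by simp [Gz]

lemma Gz_top (m : ℕ) : Gz (m+1) (m+3) = 0 := by
  rw [Gz, Nat.choose_eq_zero_of_lt (show m+1 < m+3 by omega),
    Nat.choose_eq_zero_of_lt (show m+1 < m+3-1 by omega)]
  simp

lemma erec (m : ℕ) :
    ((m:ℚ)+2) * ee (m+2) = 5*(2*((m:ℚ)+1)+1) * ee (m+1) - 9*((m:ℚ)+1) * ee m := by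
  have tele : ∑ k ∈ Finset.range (m+3), (Gz (m+1) (k+1) - Gz (m+1) k)
      = Gz (m+1) (m+3) - Gz (m+1) 0 := Finset.sum_range_sub (fun k => Gz (m+1) k) (m+3)
  rw [Gz_zero, Gz_top] at tele
  have hsum : ∑ k ∈ Finset.range (m+3),
      (((m:ℚ)+1)*((m:ℚ)+2)*Tz (m+2) k - 5*((m:ℚ)+1)*(2*((m:ℚ)+1)+1)*Tz (m+1) k
        + 9*((m:ℚ)+1)^2*Tz m k) = 0 := by
    rw [Finset.sum_congr rfl (fun k _ => zpt m k), tele]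
    ring
  rw [Finset.sum_add_distrib, Finset.sum_sub_distrib, ← Finset.mul_sum, ← Finset.mul_sum,
    ← Finset.mul_sum] at hsum
  rw [← ee_big (m+2) (m+3) (by omega), ← ee_big (m+1) (m+3) (by omega),
    ← ee_big m (m+3) (by omega)] at hsum
  have hm1 : ((m:ℚ)+1) ≠ 0 := by positivity
  apply mul_left_cancel₀ hm1
  ring_nf
  ring_nf at hsum
  linarith

def consEmb (x : ℤ) : List ℤ ↪ List ℤ :=
  ⟨fun l => x :: l, fun a b h => by injection h⟩

noncomputable def FS2 (A B : ℕ) : Finset (List ℤ) :=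
  if h : A = 0 ∧ B = 0 then {([] : List ℤ)}
  else ((Finset.Icc (-(B:ℤ)) (A:ℤ)).erase 0).attach.biUnion
    (fun x => (FS2 (A - x.1.toNat) (B - (-x.1).toNat)).map (consEmb x.1))
termination_by A + B
decreasing_by
  · have hx := x.2
    rw [Finset.mem_erase, Finset.mem_Icc] at hx
    omega

def posS (ν : List ℤ) : ℤ := (ν.filter (fun x => 0 < x)).sum
def negS (ν : List ℤ) : ℤ := -((ν.filter (fun x => x < 0)).sum)

@[simp] lemma posS_nil : posS [] = 0 := rfl
@[simp] lemma negS_nil : negS [] = 0 := by simp [negS]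

lemma posS_cons (x : ℤ) (l : List ℤ) :
    posS (x :: l) = (if 0 < x then x else 0) + posS l := by
  by_cases h : 0 < x
  · simp [posS, List.filter_cons, h]
  · simp [posS, List.filter_cons, h]

lemma negS_cons (x : ℤ) (l : List ℤ) :
    negS (x :: l) = (if x < 0 then -x else 0) + negS l := by
  by_cases h : x < 0
  · simp [negS, List.filter_cons, h]; ring
  · simp [negS, List.filter_cons, h]

lemma posS_nonneg (ν : List ℤ) : 0 ≤ posS ν := by
  induction ν with
  | nil => simp
  | cons x l ih =>
      rw [posS_cons]
      split_ifs with h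
      · linarith
      · linarith

lemma negS_nonneg (ν : List ℤ) : 0 ≤ negS ν := by
  induction ν with
  | nil => simp
  | cons x l ih =>
      rw [negS_cons]
      split_ifs with h
      · linarith
      · linarith

lemma mem_FS2 : ∀ (n A B : ℕ), A + B = n → ∀ ν : List ℤ,
    (ν ∈ FS2 A B ↔ (∀ x ∈ ν, x ≠ 0) ∧ posS ν = (A:ℤ) ∧ negS ν = (B:ℤ)) := by
  intro n
  induction n using Nat.strong_induction_on with
  | _ n ih =>
    intro A B hAB ν
    rw [FS2]
    split_ifs with h0
    · obtain ⟨hA, hB⟩ := h0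
      subst hA; subst hB
      simp only [Finset.mem_singleton]
      constructor
      · rintro rfl
        simp
      · rintro ⟨hnz, hp, hn⟩
        cases ν with
        | nil => rfl
        | cons x l =>
            exfalso
            have hx := hnz x (by simp)
            rcases lt_trichotomy x 0 with hlt | heq | hgt
            · have h1 : negS (x :: l) ≥ -x := by
                rw [negS_cons, if_pos hlt]
                linarith [negS_nonneg l]
              rw [hn] at h1
              omega
            · exact hx heq
            · have h1 : posS (x :: l) ≥ x := by
                rw [posS_cons, if_pos hgt]
                linarith [posS_nonneg l]
              rw [hp] at h1
              omega
    · constructor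
      · intro hm
        simp only [Finset.mem_biUnion, Finset.mem_attach, true_and, Subtype.exists] at hm
        obtain ⟨x, hxmem, hmap⟩ := hm
        rw [Finset.mem_map] at hmap
        obtain ⟨l, hl, rfl⟩ := hmap
        rw [Finset.mem_erase, Finset.mem_Icc] at hxmem
        obtain ⟨hx0, hxlo, hxhi⟩ := hxmem
        have hlt : (A - x.toNat) + (B - (-x).toNat) < n := by omega
        have hrec := ih _ hlt (A - x.toNat) (B - (-x).toNat) rfl l
        rw [hrec] at hl
        obtain ⟨hnz, hp, hn⟩ := hl
        refine ⟨?_, ?_, ?_⟩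
        · intro y hy
          rcases List.mem_cons.1 hy with rfl | hy'
          · exact hx0
          · exact hnz y hy'
        · show posS (x :: l) = (A:ℤ)
          rw [posS_cons, hp]
          rcases lt_trichotomy x 0 with hlt' | heq | hgt
          · rw [if_neg (by omega)]
            have : (A - x.toNat : ℕ) = A := by omega
            rw [this]
            ring
          · exact absurd heq hx0
          · rw [if_pos hgt]
            have hxA : x.toNat ≤ A := by omega
            push_cast [Nat.cast_sub hxA]
            omega
        · show negS (x :: l) = (B:ℤ)
          rw [negS_cons, hn]
          rcases lt_trichotomy x 0 with hlt' | heq | hgt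
          · rw [if_pos hlt']
            have hxB : (-x).toNat ≤ B := by omega
            push_cast [Nat.cast_sub hxB]
            omega
          · exact absurd heq hx0
          · rw [if_neg (by omega)]
            have : (B - (-x).toNat : ℕ) = B := by omega
            rw [this]
            ring
      · rintro ⟨hnz, hp, hn⟩
        cases ν with
        | nil =>
            exfalso
            simp at hp hn
            omega
        | cons x l =>
            have hx0 : x ≠ 0 := hnz x (by simp)
            simp only [Finset.mem_biUnion, Finset.mem_attach, true_and, Subtype.exists]
            have hppos := posS_nonneg l
            have hnpos := negS_nonneg l
            rcases lt_trichotomy x 0 with hlt' | heq | hgt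
            · have hpx : posS (x :: l) = posS l := by
                rw [posS_cons, if_neg (by omega)]; ring
              have hnx : negS (x :: l) = -x + negS l := by
                rw [negS_cons, if_pos hlt']
              have hxB : (-x).toNat ≤ B := by omega
              refine ⟨x, ?_, ?_⟩
              · rw [Finset.mem_erase, Finset.mem_Icc]
                refine ⟨hx0, by omega, by omega⟩
              · rw [Finset.mem_map]
                refine ⟨l, ?_, rfl⟩
                have hlt : (A - x.toNat) + (B - (-x).toNat) < n := by omega
                rw [ih _ hlt (A - x.toNat) (B - (-x).toNat) rfl l]
                refine ⟨fun y hy => hnz y (by simp [hy]), ?_, ?_⟩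
                · have : (A - x.toNat : ℕ) = A := by omega
                  rw [this]
                  omega
                · push_cast [Nat.cast_sub hxB]
                  omega
            · exact absurd heq hx0
            · have hpx : posS (x :: l) = x + posS l := by
                rw [posS_cons, if_pos hgt]
              have hnx : negS (x :: l) = negS l := by
                rw [negS_cons, if_neg (by omega)]; ring
              have hxA : x.toNat ≤ A := by omega
              refine ⟨x, ?_, ?_⟩
              · rw [Finset.mem_erase, Finset.mem_Icc]
                refine ⟨hx0, by omega, by omega⟩
              · rw [Finset.mem_map]
                refine ⟨l, ?_, rfl⟩
                have hlt : (A - x.toNat) + (B - (-x).toNat) < n := by omega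
                rw [ih _ hlt (A - x.toNat) (B - (-x).toNat) rfl l]
                refine ⟨fun y hy => hnz y (by simp [hy]), ?_, ?_⟩
                · push_cast [Nat.cast_sub hxA]
                  omega
                · have : (B - (-x).toNat : ℕ) = B := by omega
                  rw [this]
                  omega

noncomputable def Mc (A B : ℕ) : ℕ := (FS2 A B).card

lemma FS2_card (A B : ℕ) (h : ¬(A = 0 ∧ B = 0)) :
    Mc A B = ∑ x ∈ (Finset.Icc (-(B:ℤ)) (A:ℤ)).erase 0,
      Mc (A - x.toNat) (B - (-x).toNat) := by
  rw [Mc, FS2, dif_neg h, Finset.card_biUnion]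
  · rw [← Finset.sum_attach ((Finset.Icc (-(B:ℤ)) (A:ℤ)).erase 0)
      (fun x => Mc (A - x.toNat) (B - (-x).toNat))]
    apply Finset.sum_congr rfl
    intro x _
    rw [Finset.card_map]
    rfl
  · intro x _ y _ hxy
    simp only [Function.onFun]
    rw [Finset.disjoint_left]
    intro l hlx hly
    rw [Finset.mem_map] at hlx hly
    obtain ⟨lx, _, hx⟩ := hlx
    obtain ⟨ly, _, hy⟩ := hly
    apply hxy
    apply Subtype.ext
    have : x.1 :: lx = y.1 :: ly := by
      rw [show x.1 :: lx = consEmb x.1 lx from rfl, show y.1 :: ly = consEmb y.1 ly from rfl,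
        hx, hy]
    injection this

lemma sum_Icc_one_range (A : ℕ) (f : ℤ → ℕ) :
    ∑ x ∈ Finset.Icc (1:ℤ) (A:ℤ), f x = ∑ a ∈ Finset.range A, f ((A:ℤ) - a) := by
  induction A with
  | zero =>
      rw [Finset.Icc_eq_empty (by norm_num)]
      simp
  | succ A ihA =>
      have hsplit : Finset.Icc (1:ℤ) ((A+1:ℕ):ℤ) =
          insert ((A+1:ℕ):ℤ) (Finset.Icc (1:ℤ) (A:ℤ)) := by
        ext x
        simp only [Finset.mem_Icc, Finset.mem_insert]
        push_cast
        omega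
      rw [hsplit, Finset.sum_insert (by simp only [Finset.mem_Icc]; push_cast; omega), ihA,
        Finset.sum_range_succ']
      have h1 : ∀ a ∈ Finset.range A, f (((A+1:ℕ):ℤ) - ((a+1:ℕ):ℤ)) = f ((A:ℤ) - (a:ℤ)) := by
        intro a _
        congr 1
        push_cast
        ring
      rw [Finset.sum_congr rfl h1]
      push_cast
      rw [add_comm]
      norm_num

lemma sum_Icc_neg_range (B : ℕ) (f : ℤ → ℕ) :
    ∑ x ∈ Finset.Icc (-(B:ℤ)) (-1), f x = ∑ b ∈ Finset.range B, f (-((B:ℤ) - b)) := by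
  rw [← sum_Icc_one_range B (fun x => f (-x))]
  apply Finset.sum_nbij' (fun x => -x) (fun x => -x)
  · intro a ha
    rw [Finset.mem_Icc] at ha ⊢
    omega
  · intro a ha
    rw [Finset.mem_Icc] at ha ⊢
    omega
  · intro a _; ring
  · intro a _; ring
  · intro a _; rw [neg_neg]

lemma Mc_rec (A B : ℕ) (h : ¬(A = 0 ∧ B = 0)) :
    Mc A B = ∑ a ∈ Finset.range A, Mc a B + ∑ b ∈ Finset.range B, Mc A b := by
  rw [FS2_card A B h]
  have hsplit : (Finset.Icc (-(B:ℤ)) (A:ℤ)).erase 0 =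
      (Finset.Icc (-(B:ℤ)) (-1)) ∪ (Finset.Icc 1 (A:ℤ)) := by
    ext x
    simp only [Finset.mem_erase, Finset.mem_Icc, Finset.mem_union]
    omega
  have hdisj : Disjoint (Finset.Icc (-(B:ℤ)) (-1)) (Finset.Icc 1 (A:ℤ)) := by
    rw [Finset.disjoint_left]
    intro x hx hy
    rw [Finset.mem_Icc] at hx hy
    omega
  rw [hsplit, Finset.sum_union hdisj, add_comm]
  congr 1
  · -- positive heads
    rw [sum_Icc_one_range A (fun x => Mc (A - x.toNat) (B - (-x).toNat))]
    apply Finset.sum_congr rfl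
    intro a ha
    rw [Finset.mem_range] at ha
    have h1 : ((A:ℤ) - a).toNat = A - a := by omega
    have h2 : (-((A:ℤ) - a)).toNat = 0 := by omega
    rw [h1, h2, show A - (A - a) = a by omega, show B - 0 = B by omega]
  · -- negative heads
    rw [sum_Icc_neg_range B (fun x => Mc (A - x.toNat) (B - (-x).toNat))]
    apply Finset.sum_congr rfl
    intro b hb
    rw [Finset.mem_range] at hb
    have h1 : (-((B:ℤ) - b)).toNat = 0 := by omega
    have h2 : (-(-((B:ℤ) - b))).toNat = B - b := by omega
    rw [h1, h2, show A - 0 = A by omega, show B - (B - b) = b by omega]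

lemma Mc_zero_zero : Mc 0 0 = 1 := by
  rw [Mc, FS2]
  simp

lemma Mc_loc (A B : ℕ) (h : ¬(A = 0 ∧ B = 0)) :
    Mc (A+1) (B+1) + 3 * Mc A B = 2 * Mc A (B+1) + 2 * Mc (A+1) B := by
  have e1 := Mc_rec (A+1) (B+1) (by simp)
  have e2 := Mc_rec A (B+1) (by simp)
  have e3 := Mc_rec (A+1) B (by simp)
  have e4 := Mc_rec A B h
  rw [Finset.sum_range_succ, Finset.sum_range_succ (fun b => Mc (A+1) b)] at e1
  rw [Finset.sum_range_succ (fun b => Mc A b)] at e2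
  rw [Finset.sum_range_succ (fun a => Mc a B)] at e3
  omega

lemma Mc_row (A : ℕ) : Mc (A+1) 0 = 2^A := by
  induction A with
  | zero =>
      have := Mc_rec 1 0 (by simp)
      simpa [Mc_zero_zero] using this
  | succ A ihA =>
      have h1 := Mc_rec (A+2) 0 (by simp)
      have h2 := Mc_rec (A+1) 0 (by simp)
      rw [Finset.sum_range_succ] at h1
      simp only [Finset.range_zero, Finset.sum_empty, add_zero] at h1 h2
      rw [h1, ← h2, ihA]
      ring

lemma Mc_col (B : ℕ) : Mc 0 (B+1) = 2^B := by
  induction B with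
  | zero =>
      have := Mc_rec 0 1 (by simp)
      simpa [Mc_zero_zero] using this
  | succ B ihB =>
      have h1 := Mc_rec 0 (B+2) (by simp)
      have h2 := Mc_rec 0 (B+1) (by simp)
      rw [Finset.sum_range_succ] at h1
      simp only [Finset.range_zero, Finset.sum_empty, zero_add] at h1 h2
      rw [h1, ← h2, ihB]
      ring

noncomputable def dg (a b : ℤ) : ℚ := if 0 ≤ a ∧ 0 ≤ b then dd a.toNat b.toNat else 0

noncomputable def Dq (A B : ℕ) : ℚ :=
  dg A B - dg ((A:ℤ)-1) (B:ℤ) - dg (A:ℤ) ((B:ℤ)-1) + dg ((A:ℤ)-1) ((B:ℤ)-1)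

lemma dg_nat (A B : ℕ) : dg (A:ℤ) (B:ℤ) = dd A B := by
  rw [dg, if_pos ⟨Int.natCast_nonneg A, Int.natCast_nonneg B⟩, Int.toNat_natCast,
    Int.toNat_natCast]

lemma dgrec (a b : ℤ) (h : ¬(a = 0 ∧ b = 0)) :
    dg a b = 2 * dg (a-1) b + 2 * dg a (b-1) - 3 * dg (a-1) (b-1) := by
  rcases lt_or_ge a 0 with ha | ha
  · rw [dg, if_neg (by omega), dg, if_neg (by omega), dg, if_neg (by omega),
      dg, if_neg (by omega)]
    ring
  rcases lt_or_ge b 0 with hb | hb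
  · rw [dg, if_neg (by omega), dg, if_neg (by omega), dg, if_neg (by omega),
      dg, if_neg (by omega)]
    ring
  -- a, b ≥ 0
  lift a to ℕ using ha with A
  lift b to ℕ using hb with B
  rcases Nat.eq_zero_or_pos A with hA0 | hApos
  · subst hA0
    -- a = 0, b = B ≥ 1
    have hB1 : 1 ≤ B := by
      rcases Nat.eq_zero_or_pos B with h0 | h1
      · exfalso; exact h (by simp [h0])
      · exact h1
    obtain ⟨B', rfl⟩ : ∃ B', B = B' + 1 := ⟨B - 1, by omega⟩
    have e1 : ((B'+1:ℕ):ℤ) - 1 = ((B':ℕ):ℤ) := by push_cast; ring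
    rw [e1, dg_nat, dg_nat, dg, if_neg (by omega), dg, if_neg (by omega),
      dd_zero_left, dd_zero_left]
    push_cast
    rw [zpow2_add_one]
    ring
  rcases Nat.eq_zero_or_pos B with hB0 | hBpos
  · subst hB0
    obtain ⟨A', rfl⟩ : ∃ A', A = A' + 1 := ⟨A - 1, by omega⟩
    have e1 : ((A'+1:ℕ):ℤ) - 1 = ((A':ℕ):ℤ) := by push_cast; ring
    rw [e1, dg_nat, dg_nat, dg, if_neg (by omega), dg, if_neg (by omega),
      dd_zero_right, dd_zero_right]
    push_cast
    rw [zpow2_add_one]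
    ring
  obtain ⟨A', rfl⟩ : ∃ A', A = A' + 1 := ⟨A - 1, by omega⟩
  obtain ⟨B', rfl⟩ : ∃ B', B = B' + 1 := ⟨B - 1, by omega⟩
  have e1 : ((A'+1:ℕ):ℤ) - 1 = ((A':ℕ):ℤ) := by push_cast; ring
  have e2 : ((B'+1:ℕ):ℤ) - 1 = ((B':ℕ):ℤ) := by push_cast; ring
  rw [e1, e2, dg_nat, dg_nat, dg_nat, dg_nat, dloc]

lemma Dq_loc (A' B' : ℕ) (h : ¬(A' = 0 ∧ B' = 0)) :
    Dq (A'+1) (B'+1) + 3 * Dq A' B' = 2 * Dq A' (B'+1) + 2 * Dq (A'+1) B' := by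
  have h1 := dgrec ((A':ℤ)+1) ((B':ℤ)+1) (by omega)
  have h2 := dgrec (A':ℤ) ((B':ℤ)+1) (by omega)
  have h3 := dgrec ((A':ℤ)+1) (B':ℤ) (by omega)
  have h4 := dgrec (A':ℤ) (B':ℤ) (by
    intro hc
    apply h
    constructor
    · exact_mod_cast hc.1
    · exact_mod_cast hc.2)
  simp only [Dq]
  push_cast
  simp only [add_sub_cancel_right] at h1 h2 h3 ⊢
  linear_combination h1 - h2 - h3 + h4

lemma dd11 : dd 1 1 = 5 := by
  rw [dd]
  rw [Finset.sum_range_succ, Finset.sum_range_succ, Finset.sum_range_zero]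
  norm_num

lemma Dq00 : Dq 0 0 = 1 := by
  have h1 : dg ((0:ℕ):ℤ) ((0:ℕ):ℤ) = 1 := by rw [dg_nat, dd_zero_zero]
  rw [Dq]
  push_cast at h1 ⊢
  rw [h1, dg, if_neg (by omega), dg, if_neg (by omega), dg, if_neg (by omega)]
  ring

lemma Dq_row (A' : ℕ) : Dq (A'+1) 0 = 2^A' := by
  rw [Dq]
  have e1 : ((A'+1:ℕ):ℤ) - 1 = ((A':ℕ):ℤ) := by push_cast; ring
  rw [e1, dg_nat, dg_nat, dg, if_neg (by omega), dg, if_neg (by omega),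
    dd_zero_right, dd_zero_right]
  push_cast
  rw [zpow2_add_one, zpow_natCast]
  ring

lemma Dq_col (B' : ℕ) : Dq 0 (B'+1) = 2^B' := by
  rw [Dq]
  have e1 : ((B'+1:ℕ):ℤ) - 1 = ((B':ℕ):ℤ) := by push_cast; ring
  rw [e1, dg_nat, dg_nat, dg, if_neg (by omega), dg, if_neg (by omega),
    dd_zero_left, dd_zero_left]
  push_cast
  rw [zpow2_add_one, zpow_natCast]
  ring

lemma Dq11 : Dq 1 1 = 2 := by
  rw [Dq]
  have e1 : ((1:ℕ):ℤ) - 1 = ((0:ℕ):ℤ) := by norm_num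
  rw [e1, dg_nat, dg_nat, dg_nat, dg_nat, dd11, dd_zero_left, dd_zero_right, dd_zero_zero]
  norm_num

lemma Mc11 : Mc 1 1 = 2 := by
  have h := Mc_rec 1 1 (by simp)
  simp only [Finset.sum_range_succ, Finset.sum_range_zero] at h
  have h1 : Mc 0 1 = 1 := by simpa using Mc_col 0
  have h2 : Mc 1 0 = 1 := by simpa using Mc_row 0
  omega

lemma MD : ∀ (n A B : ℕ), A + B = n → (Mc A B : ℚ) = Dq A B := by
  intro n
  induction n using Nat.strong_induction_on with
  | _ n ih =>
    intro A B hAB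
    match A, B with
    | 0, 0 => rw [Mc_zero_zero, Dq00]; norm_num
    | A'+1, 0 => rw [Mc_row, Dq_row]; push_cast; ring
    | 0, B'+1 => rw [Mc_col, Dq_col]; push_cast; ring
    | A'+1, B'+1 =>
      by_cases h0 : A' = 0 ∧ B' = 0
      · obtain ⟨rfl, rfl⟩ := h0
        rw [Mc11, Dq11]
        norm_num
      · have hloc := Mc_loc A' B' h0
        have i1 : ((Mc A' (B'+1) : ℕ) : ℚ) = Dq A' (B'+1) := ih (A' + (B'+1)) (by omega) _ _ rfl
        have i2 : ((Mc (A'+1) B' : ℕ) : ℚ) = Dq (A'+1) B' := ih ((A'+1) + B') (by omega) _ _ rfl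
        have i3 : ((Mc A' B' : ℕ) : ℚ) = Dq A' B' := ih (A' + B') (by omega) _ _ rfl
        have hcast : ((Mc (A'+1) (B'+1) : ℕ) : ℚ) + 3 * ((Mc A' B' : ℕ) : ℚ)
            = 2 * ((Mc A' (B'+1) : ℕ) : ℚ) + 2 * ((Mc (A'+1) B' : ℕ) : ℚ) := by
          exact_mod_cast congrArg (Nat.cast : ℕ → ℚ) hloc
        have hD := Dq_loc A' B' h0
        rw [i1, i2, i3] at hcast
        linarith [hD, hcast]

lemma ee_dd (n : ℕ) : ee n = dd n n := by
  rw [ee, dd]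
  apply Finset.sum_congr rfl
  intro k _
  rw [Tz]
  have : 2*(n:ℤ) - 2*(k:ℤ) = (n:ℤ)+(n:ℤ)-2*(k:ℤ) := by ring
  rw [this]

lemma Mc_diag (v : ℕ) : 2 * ((Mc (v+1) (v+1) : ℕ) : ℚ) = ee (v+1) - ee v := by
  have h := MD ((v+1)+(v+1)) (v+1) (v+1) rfl
  have e1 : ((v+1:ℕ):ℤ) - 1 = ((v:ℕ):ℤ) := by push_cast; ring
  rw [h, Dq, e1, dg_nat, dg_nat, dg_nat, dg_nat, dd_symm (v+1) v, ee_dd, ee_dd]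
  linear_combination ddiag v

lemma ee0 : ee 0 = 1 := by rw [ee_dd]; exact dd_zero_zero
lemma ee1 : ee 1 = 5 := by rw [ee_dd]; exact dd11

lemma ee2 : ee 2 = 33 := by
  rw [ee_dd, dd]
  rw [Finset.sum_range_succ, Finset.sum_range_succ, Finset.sum_range_succ,
    Finset.sum_range_zero]
  norm_num

lemma pq2 : pq 2 = 28 := by
  have h := prec 0
  rw [pq1, pq0] at h
  norm_num at h
  linarith

lemma peq : ∀ u : ℕ, 1 ≤ u → pq u = ee u - ee (u-1) := by
  intro u
  induction u using Nat.strong_induction_on with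
  | _ u ih =>
    intro hu
    match u with
    | 1 => rw [pq1, ee1]; norm_num [ee0]
    | 2 => rw [pq2, ee2]; norm_num [ee1]
    | (w+3) =>
        have h1 : pq (w+1) = ee (w+1) - ee w := by
          have := ih (w+1) (by omega) (by omega)
          simpa using this
        have h2 : pq (w+2) = ee (w+2) - ee (w+1) := by
          have := ih (w+2) (by omega) (by omega)
          simpa using this
        have hp := prec (w+1)
        have hE1 := erec (w+1)
        have hE2 := erec w
        simp only [show w+1+2 = w+3 by omega, show w+1+1 = w+2 by omega] at hE1 hp
        push_cast at hE1 hE2 hp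
        rw [h1, h2] at hp
        show pq (w+3) = ee (w+3) - ee (w+2)
        have hc : (2*((w:ℚ)+2)+2) ≠ 0 := by positivity
        apply mul_left_cancel₀ hc
        linear_combination hp - 2*hE1 + 2*hE2

lemma pq_sum (u : ℕ) :
    ((-1:ℚ))^u * ∑ m ∈ Finset.range (u+1),
      3^(2*m) * gbinom (1/2) (u-m) * gbinom (-(1/2)) m = pq u := by
  rw [pq, PowerSeries.coeff_mul, Finset.Nat.sum_antidiagonal_eq_sum_range_succ_mk]
  rw [Finset.mul_sum]
  rw [← Finset.sum_range_reflect]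
  apply Finset.sum_congr rfl
  intro j hj
  rw [Finset.mem_range] at hj
  have hju : j ≤ u := by omega
  have e1 : u + 1 - 1 - j = u - j := by omega
  rw [e1]
  simp only [Sp, Tp, PowerSeries.coeff_mk, aq, bq]
  have e2 : u - (u - j) = j := by omega
  rw [e2]
  have e3 : (3:ℚ)^(2*(u-j)) = 9^(u-j) := by
    rw [pow_mul]
    norm_num
  have e4 : ((-9:ℚ))^(u-j) = (-1)^(u-j) * 9^(u-j) := by
    rw [neg_pow]
  rw [e3, e4]
  have e5 : ((-1:ℚ))^u = (-1)^j * (-1)^(u-j) := by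
    rw [← pow_add]
    congr 1
    omega
  rw [e5]
  ring

lemma abs_eq_pos_neg (ν : List ℤ) :
    (ν.map (fun x => |x|)).sum = posS ν + negS ν := by
  induction ν with
  | nil => simp
  | cons x l ih =>
      rw [List.map_cons, List.sum_cons, ih, posS_cons, negS_cons]
      rcases lt_trichotomy x 0 with h | h | h
      · rw [if_neg (by omega), if_pos h, abs_of_neg h]
        ring
      · subst h
        norm_num
      · rw [if_pos h, if_neg (by omega), abs_of_pos h]
        ring

lemma sum_eq_pos_neg (ν : List ℤ) : ν.sum = posS ν - negS ν := by
  induction ν with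
  | nil => simp
  | cons x l ih =>
      rw [List.sum_cons, ih, posS_cons, negS_cons]
      rcases lt_trichotomy x 0 with h | h | h
      · rw [if_neg (by omega), if_pos h]
        ring
      · subst h
        norm_num
      · rw [if_pos h, if_neg (by omega)]
        ring

theorem card_V0_binomial_formula (u : ℕ) (hu : 1 ≤ u) :
    (Set.ncard {ν : List ℤ | (∀ x ∈ ν, x ≠ 0) ∧
        (ν.map (fun x => |x|)).sum = 2 * (u : ℤ) ∧ ν.sum = 0} : ℚ)
      = (1 / 2) * (-1) ^ u * ∑ m ∈ Finset.range (u + 1),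
          3 ^ (2 * m) * gbinom (1 / 2) (u - m) * gbinom (-(1 / 2)) m := by
  obtain ⟨v, rfl⟩ : ∃ v, u = v + 1 := ⟨u - 1, by omega⟩
  have hset : {ν : List ℤ | (∀ x ∈ ν, x ≠ 0) ∧
      (ν.map (fun x => |x|)).sum = 2 * ((v+1 : ℕ) : ℤ) ∧ ν.sum = 0}
      = ↑(FS2 (v+1) (v+1)) := by
    ext ν
    simp only [Set.mem_setOf_eq, Finset.mem_coe]
    rw [mem_FS2 ((v+1)+(v+1)) (v+1) (v+1) rfl ν]
    constructor
    · rintro ⟨hnz, habs, hsum⟩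
      refine ⟨hnz, ?_, ?_⟩
      · have h1 := abs_eq_pos_neg ν
        have h2 := sum_eq_pos_neg ν
        rw [habs] at h1
        rw [hsum] at h2
        push_cast at h1 ⊢
        omega
      · have h1 := abs_eq_pos_neg ν
        have h2 := sum_eq_pos_neg ν
        rw [habs] at h1
        rw [hsum] at h2
        push_cast at h1 ⊢
        omega
    · rintro ⟨hnz, hp, hn⟩
      refine ⟨hnz, ?_, ?_⟩
      · rw [abs_eq_pos_neg, hp, hn]
        push_cast
        ring
      · rw [sum_eq_pos_neg, hp, hn]
        ring
  rw [hset, Set.ncard_coe_finset]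
  have hM : (FS2 (v+1) (v+1)).card = Mc (v+1) (v+1) := rfl
  rw [hM]
  have hdiag := Mc_diag v
  have hpe : pq (v+1) = ee (v+1) - ee v := by
    have := peq (v+1) (by omega)
    simpa using this
  have hps := pq_sum (v+1)
  linear_combination (1/2) * hdiag - (1/2) * hpe - (1/2) * hps
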